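/- Let μ and ν be probability measures on ℝ with all moments finite, let s = s_1…s_n ∈ S⁺ and ε ∈ {1,2}^n. Then there exists a unique coarsest pair (u′, u″), where u′ is a partition of the subword s(1,ε) and u″ is a partition of the subword s(2,ε), such that the partition u′∪u″ of s (whose blocks are those of u′ together with those of u″) is admissible; moreover, writing u′ = (u′_1,…,u′_p) and u″ = (u″_1,…,u″_q), one has (\hat{μ}⊗\hat{ν})(s,ε) = \hat{μ}(X(u′_1))⋯\hat{μ}(X(u′_p)) · \hat{ν}(X(u″_1))⋯\hat{ν}(X(u″_q)), the functionals being evaluated at the subwords of s determined by the blocks. -/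

import Mathlib

open scoped TensorProduct

/-- The two-letter alphabet `{z, w}`. -/
inductive Letter | z | w
deriving DecidableEq

/-- Words: elements of the free monoid `S = FS({z,w})`. -/
abbrev Word := List Letter

/-- The three generators `X, X', P` of the algebra `B`. -/
inductive Gen | X | X' | P
deriving DecidableEq, BEq

/-- The free unital associative `ℂ`-algebra on the generators `X, X', P`. -/
abbrev B := FreeAlgebra ℂ Gen

/-- `X(z) = X`, `X(w) = X'`. -/
noncomputable def Xletter (l : Letter) : B :=
  FreeAlgebra.ι ℂ (match l with | .z => Gen.X | .w => Gen.X')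

/-- `X(t) = X(t₁) ⋯ X(t_r)` for a word `t ∈ S`. -/
noncomputable def Xword (t : Word) : B := (t.map Xletter).prod

/-- The projection generator `P`. -/
noncomputable def Pgen : B := FreeAlgebra.ι ℂ Gen.P

/-- Value of the functional `\hat μ` (built from the moment sequence `m`, `m 0 = 1`)
on a basis word of `B`: split the word into maximal `P`-free blocks and take the
product of `m (length of block)`. -/
def wordVal (m : ℕ → ℂ) (l : List Gen) : ℂ :=
  ((l.splitOn Gen.P).map (fun t => if t = [] then 1 else m t.length)).prod

/-- The linear functional `\hat μ : B → ℂ` associated with a moment sequence `m`. -/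
noncomputable def hatL (m : ℕ → ℂ) : B →ₗ[ℂ] ℂ :=
  (Finsupp.linearCombination ℂ (fun x : FreeMonoid Gen => wordVal m (FreeMonoid.toList x))).comp
    ((MonoidAlgebra.coeffLinearEquiv ℂ).toLinearMap.comp
    (FreeAlgebra.equivMonoidAlgebraFreeMonoid : B ≃ₐ[ℂ] MonoidAlgebra ℂ (FreeMonoid Gen)).toLinearMap)

/-- The coproduct `Δ : B → B ⊗ B`, `Δ X = X⊗1 + 1⊗X`, `Δ X' = X'⊗P + P⊗X'`, `Δ P = P⊗P`. -/
noncomputable def Cop : B →ₐ[ℂ] B ⊗[ℂ] B :=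
  FreeAlgebra.lift ℂ (fun g : Gen => match g with
    | .X => FreeAlgebra.ι ℂ Gen.X ⊗ₜ[ℂ] 1 + 1 ⊗ₜ[ℂ] FreeAlgebra.ι ℂ Gen.X
    | .X' => FreeAlgebra.ι ℂ Gen.X' ⊗ₜ[ℂ] Pgen + Pgen ⊗ₜ[ℂ] FreeAlgebra.ι ℂ Gen.X'
    | .P => Pgen ⊗ₜ[ℂ] Pgen)

/-- The functional `φ ⊗ ψ` on `B ⊗ B`. -/
noncomputable def tensorFunc (φ ψ : B →ₗ[ℂ] ℂ) : B ⊗[ℂ] B →ₗ[ℂ] ℂ :=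
  (LinearMap.mul' ℂ ℂ).comp (TensorProduct.map φ ψ)

/-- The filtered convolution `φ ⋆ ψ = (φ ⊗ ψ) ∘ Δ`. -/
noncomputable def filtConv (φ ψ : B →ₗ[ℂ] ℂ) : B →ₗ[ℂ] ℂ :=
  (tensorFunc φ ψ).comp Cop.toLinearMap

/-- The `n`-th moment of a measure on `ℝ`, as a complex number. -/
noncomputable def mom (μ : MeasureTheory.Measure ℝ) (n : ℕ) : ℂ :=
  ((∫ x, x ^ n ∂μ : ℝ) : ℂ)



/-- The letter of `s` at position `j` (defaulting to `z`). -/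
def letterAt (s : Word) (j : ℕ) : Letter := s.getD j Letter.z

/-- `P` is a partition of the finite set of positions `g ⊆ ℕ` into nonempty blocks. -/
def IsPartitionOn (g : Finset ℕ) (P : Finset (Finset ℕ)) : Prop :=
  (∀ b ∈ P, b.Nonempty) ∧ (P : Set (Finset ℕ)).PairwiseDisjoint id ∧ P.sup id = g

/-- The position `j` is inner with respect to the block `b`:
`j ∉ b` and `min b < j < max b`. -/
def InnerPos (j : ℕ) (b : Finset ℕ) : Prop :=
  j ∉ b ∧ ∃ i ∈ b, ∃ k ∈ b, i < j ∧ j < k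

/-- A partition is admissible if no block contains a letter `w` that is inner
with respect to another block. -/
def Admissible (s : Word) (P : Finset (Finset ℕ)) : Prop :=
  ∀ b ∈ P, ∀ b' ∈ P, b ≠ b' → ∀ j ∈ b, letterAt s j = Letter.w → ¬ InnerPos j b'

open scoped Classical in
/-- The set `AP(s)` of admissible partitions of the positions `g` of the word `s`. -/
noncomputable def APfin (s : Word) (g : Finset ℕ) : Finset (Finset (Finset ℕ)) :=
  g.powerset.powerset.filter fun P => IsPartitionOn g P ∧ Admissible s P

/-- The subword of `s` determined by a set of positions `b`. -/
def wordOf (s : Word) (b : Finset ℕ) : Word :=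
  (b.sort (· ≤ ·)).map (letterAt s)

/-- `L` is the family of admissible cumulants of the moment function `M`:
`M(s) = Σ_{u ∈ AP(s)} L(u₁)⋯L(u_p)` for every nonempty word `s`. -/
def IsCumulants (M L : Word → ℂ) : Prop :=
  ∀ s : Word, s ≠ [] →
    M s = ∑ P ∈ APfin s (Finset.range s.length), ∏ b ∈ P, L (wordOf s b)

/-- `P` refines `Q`: every block of `P` is contained in a block of `Q`. -/
def Refines (P Q : Finset (Finset ℕ)) : Prop := ∀ b ∈ P, ∃ c ∈ Q, b ⊆ c

open scoped Classical in
/-- `m` is the Möbius function of the lattice `AP(s)` of admissible partitions of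
the position set `g` of `s`: `m(u|u) = 1` and `m(u|v) = −Σ_{u ≤ t < v} m(u|t)`. -/
noncomputable def IsMobius (s : Word) (g : Finset ℕ)
    (m : Finset (Finset ℕ) → Finset (Finset ℕ) → ℂ) : Prop :=
  (∀ u ∈ APfin s g, m u u = 1) ∧
    ∀ u ∈ APfin s g, ∀ v ∈ APfin s g, Refines u v → u ≠ v →
      m u v = -∑ t ∈ (APfin s g).filter fun t => Refines u t ∧ Refines t v ∧ t ≠ v, m u t

/-- `j₁(X(z)) = X⊗1`, `j₁(X(w)) = X'⊗P`, `j₂(X(z)) = 1⊗X`, `j₂(X(w)) = P⊗X'`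
(`true` stands for the leg `1`, `false` for the leg `2`). -/
noncomputable def jmap : Bool → Letter → B ⊗[ℂ] B
  | true, .z => FreeAlgebra.ι ℂ Gen.X ⊗ₜ[ℂ] 1
  | true, .w => FreeAlgebra.ι ℂ Gen.X' ⊗ₜ[ℂ] Pgen
  | false, .z => (1 : B) ⊗ₜ[ℂ] FreeAlgebra.ι ℂ Gen.X
  | false, .w => Pgen ⊗ₜ[ℂ] FreeAlgebra.ι ℂ Gen.X'

/-- The element `j_{ε₁}(X(s₁)) ⋯ j_{ε_n}(X(s_n))` of `B ⊗ B`. -/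
noncomputable def tensElem (s : Word) (ε : ℕ → Bool) : B ⊗[ℂ] B :=
  ((List.range s.length).map fun i => jmap (ε i) (letterAt s i)).prod

/-- The set of positions of `s` carrying the leg `v` (the subword `s(1,ε)` resp. `s(2,ε)`). -/
def legSet (s : Word) (ε : ℕ → Bool) (v : Bool) : Finset ℕ :=
  (Finset.range s.length).filter fun i => ε i = v

/-- The pair `(u₁, u₂)` is the coarsest pair of partitions of `s(1,ε)` and `s(2,ε)`
whose union is an admissible partition of `s`. -/
def IsCoarsestPair (s : Word) (ε : ℕ → Bool) (u₁ u₂ : Finset (Finset ℕ)) : Prop :=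
  (IsPartitionOn (legSet s ε true) u₁ ∧ IsPartitionOn (legSet s ε false) u₂ ∧
      Admissible s (u₁ ∪ u₂)) ∧
    ∀ v₁ v₂ : Finset (Finset ℕ),
      IsPartitionOn (legSet s ε true) v₁ → IsPartitionOn (legSet s ε false) v₂ →
        Admissible s (v₁ ∪ v₂) → Refines v₁ u₁ ∧ Refines v₂ u₂

section Generic

open Finset

/-- fibers of a function on a finite set. -/
def fibersOf (g : Finset ℕ) (f : ℕ → ℕ) : Finset (Finset ℕ) :=
  g.image fun i => g.filter fun k => f k = f i

lemma fibersOf_isPartition (g : Finset ℕ) (f : ℕ → ℕ) : IsPartitionOn g (fibersOf g f) := by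
  refine ⟨?_, ?_, ?_⟩
  · rintro b hb
    rcases Finset.mem_image.1 hb with ⟨i, hi, rfl⟩
    exact ⟨i, Finset.mem_filter.2 ⟨hi, rfl⟩⟩
  · rintro b hb b' hb' hne
    rcases Finset.mem_image.1 hb with ⟨i, hi, rfl⟩
    rcases Finset.mem_image.1 hb' with ⟨i', hi', rfl⟩
    have hfi : f i ≠ f i' := by
      intro h; apply hne; rw [h]
    refine Finset.disjoint_left.2 ?_
    intro k hk hk'
    exact hfi ((Finset.mem_filter.1 hk).2.symm.trans (Finset.mem_filter.1 hk').2)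
  · apply le_antisymm
    · exact Finset.sup_le fun b hb => by
        rcases Finset.mem_image.1 hb with ⟨i, hi, rfl⟩
        exact Finset.filter_subset _ _
    · intro i hi
      have : i ∈ (g.filter fun k => f k = f i) := Finset.mem_filter.2 ⟨hi, rfl⟩
      exact Finset.mem_sup.2 ⟨_, Finset.mem_image.2 ⟨i, hi, rfl⟩, this⟩

lemma prod_fibersOf (g : Finset ℕ) (f : ℕ → ℕ) (N : ℕ) (hb : ∀ i ∈ g, f i < N) (m : ℕ → ℂ) :
    ∏ b ∈ fibersOf g f, m b.card =
      ∏ k ∈ Finset.range N,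
        (if (g.filter fun i => f i = k).card = 0 then 1 else m (g.filter fun i => f i = k).card) := by
  have himg : fibersOf g f = (g.image f).image fun k => g.filter fun i => f i = k := by
    rw [fibersOf, Finset.image_image]
    rfl
  rw [himg]
  rw [Finset.prod_image]
  · have h2 : ∀ k ∈ g.image f, m (g.filter fun i => f i = k).card =
        (if (g.filter fun i => f i = k).card = 0 then 1 else m (g.filter fun i => f i = k).card) := by
      intro k hk
      rcases Finset.mem_image.1 hk with ⟨i, hi, rfl⟩
      rw [if_neg]
      rw [Finset.card_eq_zero]
      intro h
      have : i ∈ (g.filter fun j => f j = f i) := Finset.mem_filter.2 ⟨hi, rfl⟩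
      rw [h] at this; exact absurd this (Finset.notMem_empty i)
    rw [Finset.prod_congr rfl h2]
    apply Finset.prod_subset
    · intro k hk
      rcases Finset.mem_image.1 hk with ⟨i, hi, rfl⟩
      exact Finset.mem_range.2 (hb i hi)
    · intro k _ hk
      rw [if_pos]
      rw [Finset.card_eq_zero, Finset.filter_eq_empty_iff]
      intro i hi hfi
      exact hk (Finset.mem_image.2 ⟨i, hi, hfi⟩)
  · intro k hk k' hk' heq
    rcases Finset.mem_image.1 hk with ⟨i, hi, rfl⟩
    have : i ∈ (g.filter fun j => f j = f i) := Finset.mem_filter.2 ⟨hi, rfl⟩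
    beta_reduce at heq
    rw [heq] at this
    exact (Finset.mem_filter.1 this).2

/-- mutual refinement of partitions implies equality -/
lemma refines_antisymm {g : Finset ℕ} {P Q : Finset (Finset ℕ)}
    (hP : IsPartitionOn g P) (hQ : IsPartitionOn g Q)
    (h1 : Refines P Q) (h2 : Refines Q P) : P = Q := by
  have key : ∀ (R S : Finset (Finset ℕ)), IsPartitionOn g R → Refines R S → Refines S R → R ⊆ S := by
    intro R S hR hRS hSR b hb
    rcases hRS b hb with ⟨c, hc, hbc⟩
    rcases hSR c hc with ⟨b', hb', hcb'⟩
    have hbb' : b = b' := by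
      by_contra hne
      have hd := hR.2.1 hb hb' hne
      rcases hR.1 b hb with ⟨x, hx⟩
      exact (Finset.disjoint_left.1 hd hx) (hcb' (hbc hx))
    have : b = c := le_antisymm hbc (hbb' ▸ hcb')
    exact this ▸ hc
  exact le_antisymm (key P Q hP h1 h2) (key Q P hQ h2 h1)

end Generic
section SplitCount

/-- number of non-`P` letters in the `k`-th maximal `P`-free block -/
def cntR : List Gen → ℕ → ℕ
  | [], _ => 0
  | a :: t, k =>
    if a = Gen.P then (match k with | 0 => 0 | k+1 => cntR t k)
    else (match k with | 0 => cntR t 0 + 1 | k+1 => cntR t (k+1))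

/-- the `if c = 0` value function -/
def gval (m : ℕ → ℂ) (c : ℕ) : ℂ := if c = 0 then 1 else m c

lemma gen_beq_false {a : Gen} (h : a ≠ Gen.P) : (a == Gen.P) = false := by
  cases a
  · rfl
  · rfl
  · exact absurd rfl h

lemma gen_beq_true : (Gen.P == Gen.P) = true := rfl

lemma cntR_cons_P_zero (t : List Gen) : cntR (Gen.P :: t) 0 = 0 := by simp [cntR]

lemma cntR_cons_P_succ (t : List Gen) (k : ℕ) : cntR (Gen.P :: t) (k+1) = cntR t k := by
  simp [cntR]

lemma cntR_cons_ne_zero {b : Gen} (hb : b ≠ Gen.P) (t : List Gen) :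
    cntR (b :: t) 0 = cntR t 0 + 1 := by simp [cntR, hb]

lemma cntR_cons_ne_succ {b : Gen} (hb : b ≠ Gen.P) (t : List Gen) (k : ℕ) :
    cntR (b :: t) (k+1) = cntR t (k+1) := by simp [cntR, hb]

lemma count_cons_P (t : List Gen) : (Gen.P :: t).count Gen.P = t.count Gen.P + 1 := by
  rw [List.count_cons, gen_beq_true]
  simp

lemma count_cons_ne {a : Gen} (ha : a ≠ Gen.P) (t : List Gen) :
    (a :: t).count Gen.P = t.count Gen.P := by
  rw [List.count_cons, gen_beq_false ha]
  simp

lemma splitOn_cons_P (t : List Gen) :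
    (Gen.P :: t).splitOn Gen.P = [] :: t.splitOn Gen.P := by
  rw [List.splitOn, List.splitOnP_cons, if_pos gen_beq_true]
  rfl

lemma splitOn_cons_ne {a : Gen} (ha : a ≠ Gen.P) (t : List Gen) :
    (a :: t).splitOn Gen.P = (t.splitOn Gen.P).modifyHead (List.cons a) := by
  rw [List.splitOn, List.splitOnP_cons, gen_beq_false ha]
  rfl

lemma splitOn_dest (t : List Gen) :
    t.splitOn Gen.P = (t.splitOn Gen.P).headI :: (t.splitOn Gen.P).tail := by
  have hne := List.splitOnP_ne_nil (fun x => x == Gen.P) t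
  cases h : t.splitOn Gen.P with
  | nil => exact absurd h hne
  | cons x xs => simp

lemma headI_val (m : ℕ → ℂ) (t : List Gen) :
    (if (t.splitOn Gen.P).headI = [] then (1:ℂ) else m (t.splitOn Gen.P).headI.length)
      = gval m (cntR t 0) →
    True := fun _ => trivial

lemma splitOn_invariants (w : List Gen) (m : ℕ → ℂ) :
    ((w.splitOn Gen.P).headI).length = cntR w 0 ∧
      (((w.splitOn Gen.P).tail).map fun t => if t = [] then 1 else m t.length).prod =
        ∏ k ∈ Finset.range (w.count Gen.P), gval m (cntR w (k+1)) := by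
  induction w with
  | nil => simp [List.splitOn, List.splitOnP_nil, cntR]
  | cons a t ih =>
    have h0 : (if (t.splitOn Gen.P).headI = [] then (1:ℂ) else m (t.splitOn Gen.P).headI.length)
        = gval m (cntR t 0) := by
      rw [gval]
      by_cases h : (t.splitOn Gen.P).headI = []
      · rw [if_pos h, if_pos]
        rw [← ih.1, h]; rfl
      · rw [if_neg h, if_neg, ih.1]
        rw [← ih.1]
        simpa using h
    by_cases ha : a = Gen.P
    · subst ha
      rw [splitOn_cons_P]
      constructor
      · simp [cntR]
      · simp only [List.tail_cons]
        conv_lhs => rw [splitOn_dest t]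
        rw [List.map_cons, List.prod_cons, ih.2]
        rw [count_cons_P, Finset.prod_range_succ']
        rw [h0, mul_comm]
        congr 1
    · have hmod : (t.splitOn Gen.P).modifyHead (List.cons a)
          = (a :: (t.splitOn Gen.P).headI) :: (t.splitOn Gen.P).tail := by
        conv_lhs => rw [splitOn_dest t]
        rfl
      rw [splitOn_cons_ne ha, hmod]
      constructor
      · simp only [List.headI_cons, List.length_cons]
        rw [ih.1]
        simp [cntR, ha]
      · simp only [List.tail_cons]
        rw [ih.2, count_cons_ne ha]
        apply Finset.prod_congr rfl
        intro k _
        simp [cntR, ha]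

lemma wordVal_eq_prod_cntR (w : List Gen) (m : ℕ → ℂ) :
    wordVal m w = ∏ k ∈ Finset.range (w.count Gen.P + 1), gval m (cntR w k) := by
  obtain ⟨h1, h2⟩ := splitOn_invariants w m
  rw [wordVal]
  conv_lhs => rw [splitOn_dest w]
  rw [List.map_cons, List.prod_cons, h2, Finset.prod_range_succ']
  have h0 : (if (w.splitOn Gen.P).headI = [] then (1:ℂ) else m (w.splitOn Gen.P).headI.length)
      = gval m (cntR w 0) := by
    rw [gval]
    by_cases h : (w.splitOn Gen.P).headI = []
    · rw [if_pos h, if_pos]; rw [← h1, h]; rfl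
    · rw [if_neg h, if_neg, h1]; rw [← h1]; simpa using h
  rw [h0, mul_comm]

lemma cntR_append_P (w : List Gen) (k : ℕ) : cntR (w ++ [Gen.P]) k = cntR w k := by
  induction w generalizing k with
  | nil => cases k <;> simp [cntR]
  | cons a t ih =>
    rw [List.cons_append]
    by_cases ha : a = Gen.P
    · subst ha
      cases k with
      | zero => rw [cntR_cons_P_zero, cntR_cons_P_zero]
      | succ k => rw [cntR_cons_P_succ, cntR_cons_P_succ, ih]
    · cases k with
      | zero => rw [cntR_cons_ne_zero ha, cntR_cons_ne_zero ha, ih]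
      | succ k => rw [cntR_cons_ne_succ ha, cntR_cons_ne_succ ha, ih]

lemma cntR_append_ne {a : Gen} (ha : a ≠ Gen.P) (w : List Gen) (k : ℕ) :
    cntR (w ++ [a]) k = cntR w k + if k = w.count Gen.P then 1 else 0 := by
  induction w generalizing k with
  | nil =>
    cases k with
    | zero => simp [cntR, ha]
    | succ k => simp [cntR, ha]
  | cons b t ih =>
    rw [List.cons_append]
    by_cases hb : b = Gen.P
    · subst hb
      rw [count_cons_P]
      cases k with
      | zero => rw [cntR_cons_P_zero, cntR_cons_P_zero, if_neg (by omega)]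
      | succ k =>
        rw [cntR_cons_P_succ, cntR_cons_P_succ, ih k]
        congr 1
        simp
    · rw [count_cons_ne hb]
      cases k with
      | zero => rw [cntR_cons_ne_zero hb, cntR_cons_ne_zero hb, ih 0]; ring
      | succ k => rw [cntR_cons_ne_succ hb, cntR_cons_ne_succ hb, ih (k+1)]

end SplitCount
section ListFinset

open Finset

variable (o : ℕ → Option Gen)

/-- positions with a non-P generator -/
def GsetO (n : ℕ) : Finset ℕ :=
  (Finset.range n).filter fun i => o i ≠ none ∧ o i ≠ some Gen.P

/-- positions with P -/
def CsetO (n : ℕ) : Finset ℕ :=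
  (Finset.range n).filter fun i => o i = some Gen.P

/-- the list of generators -/
def LoO (n : ℕ) : List Gen := (List.range n).filterMap o

lemma keyO_mono {i k : ℕ} (h : i ≤ k) : (CsetO o i).card ≤ (CsetO o k).card :=
  Finset.card_le_card (Finset.filter_subset_filter _ (by simpa using Finset.range_subset_range.2 h))

lemma count_card (n : ℕ) : (LoO o n).count Gen.P = (CsetO o n).card := by
  induction n with
  | zero => simp [LoO, CsetO]
  | succ n ih =>
    rw [LoO, List.range_succ, List.filterMap_append]
    have hC : CsetO o (n+1) = if o n = some Gen.P then insert n (CsetO o n) else CsetO o n := by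
      rw [CsetO, Finset.range_add_one, Finset.filter_insert]
      split <;> rfl
    cases ho : o n with
    | none =>
      rw [hC, if_neg (by simp [ho])]
      simpa [ho, LoO] using ih
    | some g =>
      by_cases hg : g = Gen.P
      · subst hg
        rw [hC, if_pos ho, Finset.card_insert_of_notMem (by simp [CsetO])]
        simp only [List.filterMap_cons, ho, List.filterMap_nil]
        rw [List.count_append]
        simp [LoO] at ih
        simp [ih, List.count_cons, gen_beq_true]
      · rw [hC, if_neg (by simp [ho, hg])]
        simp only [List.filterMap_cons, ho, List.filterMap_nil]
        rw [List.count_append]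
        simp [LoO] at ih
        simp [ih, List.count_cons, gen_beq_false hg]

lemma cntR_card (n : ℕ) (k : ℕ) :
    cntR (LoO o n) k = ((GsetO o n).filter fun i => (CsetO o i).card = k).card := by
  induction n generalizing k with
  | zero => simp [LoO, GsetO, cntR]
  | succ n ih =>
    have hG : GsetO o (n+1) =
        if o n ≠ none ∧ o n ≠ some Gen.P then insert n (GsetO o n) else GsetO o n := by
      rw [GsetO, Finset.range_add_one, Finset.filter_insert]
      split <;> rfl
    have hL : LoO o (n+1) = LoO o n ++ (o n).toList := by
      cases ho2 : o n <;> simp [LoO, List.range_succ, ho2]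
    cases ho : o n with
    | none =>
      have hG' : GsetO o (n+1) = GsetO o n := by
        rw [hG, if_neg (by simp [ho])]
      rw [hL, ho]
      simp only [Option.toList_none, List.append_nil]
      rw [ih, hG']
    | some g =>
      by_cases hg : g = Gen.P
      · subst hg
        have hG' : GsetO o (n+1) = GsetO o n := by
          rw [hG, if_neg (by simp [ho])]
        rw [hL, ho]
        simp only [Option.toList_some]
        rw [cntR_append_P, ih, hG']
      · have hG' : GsetO o (n+1) = insert n (GsetO o n) := by
          rw [hG, if_pos ⟨by simp [ho], by simp [ho, hg]⟩]
        rw [hL, ho]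
        simp only [Option.toList_some]
        rw [cntR_append_ne hg, ih, count_card, hG', Finset.filter_insert]
        have hnmem : n ∉ (GsetO o n).filter fun i => (CsetO o i).card = k := by
          simp [GsetO]
        by_cases hk : (CsetO o n).card = k
        · rw [if_pos hk, Finset.card_insert_of_notMem hnmem, if_pos hk.symm]
        · rw [if_neg hk, if_neg (fun h => hk h.symm), Nat.add_zero]

lemma wordVal_LoO (m : ℕ → ℂ) (n : ℕ) :
    wordVal m (LoO o n) = ∏ b ∈ fibersOf (GsetO o n) (fun i => (CsetO o i).card), m b.card := by
  rw [wordVal_eq_prod_cntR, count_card]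
  rw [prod_fibersOf (GsetO o n) _ ((CsetO o n).card + 1)
    (fun i hi => Nat.lt_succ_of_le (keyO_mono o (le_of_lt (Finset.mem_range.1 (Finset.mem_filter.1 hi).1))))]
  apply Finset.prod_congr rfl
  intro k _
  rw [cntR_card, gval]

end ListFinset
section WordCombinatorics

open Finset

variable (s : Word) (ε : ℕ → Bool)

/-- the generator (or nothing) contributed to leg `v` at position `i` -/
def optF (v : Bool) (i : ℕ) : Option Gen :=
  if ε i = v then some (match letterAt s i with | .z => Gen.X | .w => Gen.X')
  else if letterAt s i = Letter.w then some Gen.P else none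

/-- number of opposite-leg `w`'s strictly below `i` -/
def keyv (v : Bool) (i : ℕ) : ℕ := (CsetO (optF s ε v) i).card

/-- the canonical coarsest partition of the `v`-leg positions -/
noncomputable def ublocks (v : Bool) : Finset (Finset ℕ) :=
  fibersOf (legSet s ε v) (keyv s ε v)

lemma Gset_eq (v : Bool) : GsetO (optF s ε v) s.length = legSet s ε v := by
  ext i
  simp only [GsetO, legSet, Finset.mem_filter, Finset.mem_range]
  simp only [optF]
  constructor
  · rintro ⟨hi, h1, h2⟩
    refine ⟨hi, ?_⟩
    by_contra hv
    rw [if_neg hv] at h1 h2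
    by_cases hw : letterAt s i = Letter.w
    · rw [if_pos hw] at h2; exact h2 rfl
    · rw [if_neg hw] at h1; exact h1 rfl
  · rintro ⟨hi, hv⟩
    rw [if_pos hv]
    refine ⟨hi, by simp, ?_⟩
    cases h : letterAt s i <;> simp

lemma Cset_eq (v : Bool) (i : ℕ) :
    CsetO (optF s ε v) i
      = (Finset.range i).filter fun j => ε j = !v ∧ letterAt s j = Letter.w := by
  ext j
  simp only [CsetO, Finset.mem_filter, Finset.mem_range]
  simp only [optF]
  constructor
  · rintro ⟨hj, h⟩
    by_cases hv : ε j = v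
    · rw [if_pos hv] at h
      cases hl : letterAt s j <;> simp [hl] at h
    · rw [if_neg hv] at h
      by_cases hw : letterAt s j = Letter.w
      · refine ⟨hj, ?_, hw⟩
        cases hε : ε j <;> cases v <;> simp_all
      · rw [if_neg hw] at h; exact absurd h (by simp)
  · rintro ⟨hj, hv, hw⟩
    have hvv : ¬ ε j = v := by cases v <;> simp_all
    rw [if_neg hvv, if_pos hw]
    exact ⟨hj, rfl⟩

lemma keyv_mono (v : Bool) {i k : ℕ} (h : i ≤ k) : keyv s ε v i ≤ keyv s ε v k :=
  keyO_mono _ h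

lemma mem_legSet {v : Bool} {i : ℕ} :
    i ∈ legSet s ε v ↔ i < s.length ∧ ε i = v := by
  simp [legSet]

lemma keyv_lt {v : Bool} {i j k : ℕ} (hij : i ≤ j) (hjk : j < k)
    (hj1 : ε j = !v) (hj2 : letterAt s j = Letter.w) : keyv s ε v i < keyv s ε v k := by
  rw [keyv, keyv, Cset_eq, Cset_eq]
  apply Finset.card_lt_card
  constructor
  · exact Finset.filter_subset_filter _ (by
      simpa using Finset.range_subset_range.2 (le_of_lt (lt_of_le_of_lt hij hjk)))
  · intro hsub
    have hjmem : j ∈ (Finset.range k).filter fun j => ε j = !v ∧ letterAt s j = Letter.w :=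
      Finset.mem_filter.2 ⟨Finset.mem_range.2 hjk, hj1, hj2⟩
    have := hsub hjmem
    rw [Finset.mem_filter, Finset.mem_range] at this
    omega

lemma keyv_exists_cut {v : Bool} {i k : ℕ} (hik : i < k)
    (hne : keyv s ε v i ≠ keyv s ε v k) :
    ∃ j, i ≤ j ∧ j < k ∧ ε j = !v ∧ letterAt s j = Letter.w := by
  have hsub : CsetO (optF s ε v) i ⊆ CsetO (optF s ε v) k := by
    rw [Cset_eq, Cset_eq]
    exact Finset.filter_subset_filter _ (by simpa using Finset.range_subset_range.2 (le_of_lt hik))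
  have hss : CsetO (optF s ε v) i ⊂ CsetO (optF s ε v) k := by
    refine ⟨hsub, fun h => hne ?_⟩
    rw [keyv, keyv]
    exact le_antisymm (Finset.card_le_card hsub) (Finset.card_le_card h)
  rcases Finset.exists_of_ssubset hss with ⟨j, hjk, hji⟩
  rw [Cset_eq, Finset.mem_filter, Finset.mem_range] at hjk
  rw [Cset_eq, Finset.mem_filter, Finset.mem_range] at hji
  refine ⟨j, ?_, hjk.1, hjk.2.1, hjk.2.2⟩
  by_contra h
  exact hji ⟨by omega, hjk.2⟩

lemma mem_ublocks_sub {v : Bool} {b : Finset ℕ} (hb : b ∈ ublocks s ε v) :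
    b ⊆ legSet s ε v := by
  rcases Finset.mem_image.1 hb with ⟨i, _, rfl⟩
  exact Finset.filter_subset _ _

lemma ublocks_partition (v : Bool) : IsPartitionOn (legSet s ε v) (ublocks s ε v) :=
  fibersOf_isPartition _ _

lemma ublocks_admissible : Admissible s (ublocks s ε true ∪ ublocks s ε false) := by
  rintro b hb b' hb' _ j hj hw ⟨hjb', i, hi, k, hk, hij, hjk⟩
  -- b lives on leg u, b' on leg v'
  obtain ⟨u, hbu⟩ : ∃ u, b ∈ ublocks s ε u := by
    rcases Finset.mem_union.1 hb with h | h
    · exact ⟨true, h⟩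
    · exact ⟨false, h⟩
  obtain ⟨v', hbv'⟩ : ∃ v', b' ∈ ublocks s ε v' := by
    rcases Finset.mem_union.1 hb' with h | h
    · exact ⟨true, h⟩
    · exact ⟨false, h⟩
  have hjleg : j ∈ legSet s ε u := mem_ublocks_sub s ε hbu hj
  rcases Finset.mem_image.1 hbv' with ⟨i₀, hi₀, hb'eq⟩
  have hikey : keyv s ε v' i = keyv s ε v' i₀ := by
    have := hi; rw [← hb'eq, Finset.mem_filter] at this; exact this.2
  have hkkey : keyv s ε v' k = keyv s ε v' i₀ := by
    have := hk; rw [← hb'eq, Finset.mem_filter] at this; exact this.2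
  by_cases huv : u = v'
  · -- j on the same leg as b' : monotonicity forces j ∈ b'
    subst huv
    have hj1 : keyv s ε u i ≤ keyv s ε u j := keyv_mono s ε u (le_of_lt hij)
    have hj2 : keyv s ε u j ≤ keyv s ε u k := keyv_mono s ε u (le_of_lt hjk)
    have : keyv s ε u j = keyv s ε u i₀ := by omega
    apply hjb'
    rw [← hb'eq, Finset.mem_filter]
    exact ⟨hjleg, this⟩
  · -- j on the opposite leg : it is a cut for the key of leg v'
    have hju : ε j = !v' := by
      have := (mem_legSet s ε).1 hjleg
      cases u <;> cases v' <;> simp_all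
    have : keyv s ε v' i < keyv s ε v' k := keyv_lt s ε (le_of_lt hij) hjk hju hw
    omega

lemma refines_ublocks (v : Bool) (Pv Po : Finset (Finset ℕ))
    (hPv : IsPartitionOn (legSet s ε v) Pv) (hPo : IsPartitionOn (legSet s ε (!v)) Po)
    (hadm : Admissible s (Pv ∪ Po)) : Refines Pv (ublocks s ε v) := by
  intro b hb
  have hbsub : b ⊆ legSet s ε v := by
    have := Finset.le_sup (f := id) hb
    rw [hPv.2.2] at this
    exact this
  rcases hPv.1 b hb with ⟨i₀, hi₀⟩
  have hkeyconst : ∀ i ∈ b, ∀ k ∈ b, i < k → keyv s ε v i = keyv s ε v k := by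
    intro i hi k hk hik
    by_contra hne
    rcases keyv_exists_cut s ε hik hne with ⟨j, hij, hjk, hj1, hj2⟩
    have hiv : ε i = v := ((mem_legSet s ε).1 (hbsub hi)).2
    have hkn : k < s.length := ((mem_legSet s ε).1 (hbsub hk)).1
    have hij' : i < j := by
      rcases lt_or_eq_of_le hij with h | h
      · exact h
      · subst h; rw [hiv] at hj1; simp at hj1
    have hjleg : j ∈ legSet s ε (!v) := (mem_legSet s ε).2 ⟨by omega, hj1⟩
    have hjmem : j ∈ Po.sup id := by rw [hPo.2.2]; exact hjleg
    rcases Finset.mem_sup.1 hjmem with ⟨b'', hb'', hjb''⟩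
    have hjnb : j ∉ b := fun h => by
      have hjv := ((mem_legSet s ε).1 (hbsub h)).2
      rw [hjv] at hj1; simp at hj1
    have hbne : b'' ≠ b := fun h => hjnb (h ▸ hjb'')
    exact hadm b'' (Finset.mem_union_right _ hb'') b (Finset.mem_union_left _ hb) hbne
      j hjb'' hj2 ⟨hjnb, i, hi, k, hk, hij', hjk⟩
  refine ⟨(legSet s ε v).filter fun k => keyv s ε v k = keyv s ε v i₀,
    Finset.mem_image.2 ⟨i₀, hbsub hi₀, rfl⟩, ?_⟩
  intro k hk
  rw [Finset.mem_filter]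
  refine ⟨hbsub hk, ?_⟩
  rcases lt_trichotomy k i₀ with h | h | h
  · exact hkeyconst k hk i₀ hi₀ h
  · rw [h]
  · exact (hkeyconst i₀ hi₀ k hk h).symm

lemma ublocks_coarsest : IsCoarsestPair s ε (ublocks s ε true) (ublocks s ε false) := by
  refine ⟨⟨ublocks_partition s ε true, ublocks_partition s ε false, ublocks_admissible s ε⟩, ?_⟩
  intro v₁ v₂ h₁ h₂ hadm
  constructor
  · exact refines_ublocks s ε true v₁ v₂ h₁ (by simpa using h₂) hadm
  · apply refines_ublocks s ε false v₂ v₁ (by simpa using h₂) (by simpa using h₁)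
    rwa [Finset.union_comm]

lemma coarsest_unique {u₁ u₂ : Finset (Finset ℕ)} (h : IsCoarsestPair s ε u₁ u₂) :
    u₁ = ublocks s ε true ∧ u₂ = ublocks s ε false := by
  obtain ⟨⟨hp1, hp2, hadm⟩, hco⟩ := h
  obtain ⟨⟨hq1, hq2, hadm'⟩, hco'⟩ := ublocks_coarsest s ε
  obtain ⟨hr1, hr2⟩ := hco' u₁ u₂ hp1 hp2 hadm
  obtain ⟨hs1, hs2⟩ := hco (ublocks s ε true) (ublocks s ε false) hq1 hq2 hadm'
  exact ⟨refines_antisymm hp1 hq1 hr1 hs1, refines_antisymm hp2 hq2 hr2 hs2⟩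

end WordCombinatorics
section AlgebraSide

/-- product of generators -/
noncomputable def ofList (l : List Gen) : B := (l.map (FreeAlgebra.ι ℂ)).prod

lemma equiv_ofList (l : List Gen) :
    FreeAlgebra.equivMonoidAlgebraFreeMonoid (ofList l)
      = MonoidAlgebra.single (FreeMonoid.ofList l) (1 : ℂ) := by
  induction l with
  | nil =>
    show FreeAlgebra.equivMonoidAlgebraFreeMonoid (1 : B) = _
    rw [map_one]
    rfl
  | cons a t ih =>
    have : ofList (a :: t) = FreeAlgebra.ι ℂ a * ofList t := by
      rw [ofList, List.map_cons, List.prod_cons]; rfl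
    rw [this, map_mul, ih]
    have ha : FreeAlgebra.equivMonoidAlgebraFreeMonoid (FreeAlgebra.ι ℂ a)
        = MonoidAlgebra.single (FreeMonoid.of a) (1 : ℂ) := by
      rw [FreeAlgebra.equivMonoidAlgebraFreeMonoid]
      simp [FreeAlgebra.lift_ι_apply]
    rw [ha, MonoidAlgebra.single_mul_single, one_mul]
    rfl

lemma hatL_ofList (m : ℕ → ℂ) (l : List Gen) : hatL m (ofList l) = wordVal m l := by
  rw [hatL]
  simp only [LinearMap.coe_comp, Function.comp_apply]
  erw [equiv_ofList]
  change (Finsupp.linearCombination ℂ fun x : FreeMonoid Gen => wordVal m (FreeMonoid.toList x))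
    (Finsupp.single (FreeMonoid.ofList l) 1) = wordVal m l
  rw [Finsupp.linearCombination_single, one_smul, FreeMonoid.toList_ofList]

lemma tensorFunc_tmul (φ ψ : B →ₗ[ℂ] ℂ) (a b : B) :
    tensorFunc φ ψ (a ⊗ₜ[ℂ] b) = φ a * ψ b := by
  rw [tensorFunc]
  simp [TensorProduct.map_tmul, LinearMap.mul'_apply]

lemma jmap_eq (s : Word) (ε : ℕ → Bool) (i : ℕ) :
    jmap (ε i) (letterAt s i)
      = (((optF s ε true i).map (FreeAlgebra.ι ℂ)).getD 1)
          ⊗ₜ[ℂ] (((optF s ε false i).map (FreeAlgebra.ι ℂ)).getD 1) := by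
  cases hε : ε i <;> cases hl : letterAt s i <;>
    simp [jmap, optF, hε, hl, Pgen]

lemma prod_tmul_split (s : Word) (ε : ℕ → Bool) (l : List ℕ) :
    ((l.map fun i => jmap (ε i) (letterAt s i)).prod)
      = ofList (l.filterMap (optF s ε true)) ⊗ₜ[ℂ] ofList (l.filterMap (optF s ε false)) := by
  induction l with
  | nil =>
    simp only [List.map_nil, List.prod_nil, List.filterMap_nil]
    rw [ofList]
    simp only [List.map_nil, List.prod_nil]
    rw [Algebra.TensorProduct.one_def]
  | cons a t ih =>
    rw [List.map_cons, List.prod_cons, ih, jmap_eq, Algebra.TensorProduct.tmul_mul_tmul]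
    congr 1
    · cases h : optF s ε true a with
      | none => simp [h, List.filterMap_cons, ofList]
      | some g => simp [h, List.filterMap_cons, ofList]
    · cases h : optF s ε false a with
      | none => simp [h, List.filterMap_cons, ofList]
      | some g => simp [h, List.filterMap_cons, ofList]

lemma tensElem_eq (s : Word) (ε : ℕ → Bool) :
    tensElem s ε = ofList (LoO (optF s ε true) s.length)
      ⊗ₜ[ℂ] ofList (LoO (optF s ε false) s.length) := by
  rw [tensElem, prod_tmul_split]
  rfl

lemma splitOn_no_P {l : List Gen} (h : Gen.P ∉ l) : l.splitOn Gen.P = [l] := by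
  show l.splitOnP (· == Gen.P) = [l]
  apply List.splitOnP_eq_single
  intro x hx
  have hx' : x ≠ Gen.P := fun e => h (e ▸ hx)
  rw [gen_beq_false hx']

lemma hatL_Xword (m : ℕ → ℂ) (t : Word) (ht : t ≠ []) :
    hatL m (Xword t) = m t.length := by
  have hX : Xword t = ofList (t.map fun a => match a with | Letter.z => Gen.X | Letter.w => Gen.X') := by
    rw [Xword, ofList, List.map_map]
    rfl
  rw [hX, hatL_ofList, wordVal]
  have hnoP : Gen.P ∉ t.map fun a => match a with | Letter.z => Gen.X | Letter.w => Gen.X' := by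
    intro h
    rcases List.mem_map.1 h with ⟨a, _, ha⟩
    cases a <;> simp_all
  rw [splitOn_no_P hnoP]
  have : (t.map fun a => match a with | Letter.z => Gen.X | Letter.w => Gen.X') ≠ [] := by
    simpa using ht
  simp [this]

end AlgebraSide
lemma prod_hatL_ublocks (m : ℕ → ℂ) (s : Word) (ε : ℕ → Bool) (v : Bool) :
    ∏ b ∈ ublocks s ε v, hatL m (Xword (wordOf s b)) = ∏ b ∈ ublocks s ε v, m b.card := by
  apply Finset.prod_congr rfl
  intro b hb
  have hbne : b.Nonempty := (ublocks_partition s ε v).1 b hb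
  have hlen : (wordOf s b).length = b.card := by
    rw [wordOf, List.length_map, Finset.length_sort]
  have hne : wordOf s b ≠ [] := by
    intro h
    have hc : b.card = 0 := by rw [← hlen, h]; rfl
    rcases hbne with ⟨x, hx⟩
    exact (Finset.card_ne_zero_of_mem hx) hc
  rw [hatL_Xword m _ hne, hlen]

lemma main_value (m₁ m₂ : ℕ → ℂ) (s : Word) (ε : ℕ → Bool) :
    tensorFunc (hatL m₁) (hatL m₂) (tensElem s ε) =
      (∏ b ∈ ublocks s ε true, m₁ b.card) * ∏ b ∈ ublocks s ε false, m₂ b.card := by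
  rw [tensElem_eq, tensorFunc_tmul, hatL_ofList, hatL_ofList]
  rw [wordVal_LoO, wordVal_LoO]
  congr 1
  · rw [ublocks, Gset_eq]
    rfl
  · rw [ublocks, Gset_eq]
    rfl

/-- the mixed moment `(μ̂⊗ν̂)(s,ε)` factorizes along the unique coarsest
pair of partitions of `s(1,ε)`, `s(2,ε)` defining an admissible partition of `s`. -/
theorem tensor_moment_factorization (μ ν : MeasureTheory.Measure ℝ)
    [MeasureTheory.IsProbabilityMeasure μ] [MeasureTheory.IsProbabilityMeasure ν]
    (hμ : ∀ n : ℕ, MeasureTheory.Integrable (fun x => x ^ n) μ)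
    (hν : ∀ n : ℕ, MeasureTheory.Integrable (fun x => x ^ n) ν)
    (s : Word) (hs : s ≠ []) (ε : ℕ → Bool) :
    (∃! p : Finset (Finset ℕ) × Finset (Finset ℕ), IsCoarsestPair s ε p.1 p.2) ∧
      ∀ u₁ u₂ : Finset (Finset ℕ), IsCoarsestPair s ε u₁ u₂ →
        tensorFunc (hatL (mom μ)) (hatL (mom ν)) (tensElem s ε) =
          (∏ b ∈ u₁, hatL (mom μ) (Xword (wordOf s b))) *
            ∏ b ∈ u₂, hatL (mom ν) (Xword (wordOf s b)) := by
  constructor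
  · refine ⟨(ublocks s ε true, ublocks s ε false), ublocks_coarsest s ε, ?_⟩
    intro p hp
    obtain ⟨h1, h2⟩ := coarsest_unique s ε hp
    exact Prod.ext h1 h2
  · intro u₁ u₂ h
    obtain ⟨h1, h2⟩ := coarsest_unique s ε h
    subst h1; subst h2
    rw [prod_hatL_ublocks, prod_hatL_ublocks, main_value]
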